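/- If M contains all three-element subsets of ℕ, then the canonical basis e₁, e₂, … is a shrinking basis of the completion T*[M,1/2] of (c₀₀, ‖·‖_M): every bounded linear functional x* on T*[M,1/2] satisfies x* = ∑ᵢ x*(eᵢ) eᵢ* in norm, where eᵢ* is the dual basic sequence. -/
import Mathlib


/-- A family `E 0, …, E (n-1)` of finite subsets of `ℕ` is `M`-admissible if some `A ∈ M`
(coded as a Boolean-valued function on `ℕ`) contains `m 0 ≤ E 0 < m 1 ≤ E 1 < ⋯ < m (n-1) ≤ E (n-1)`. -/
def MAdmissible (M : Set (ℕ → Bool)) {n : ℕ} (E : Fin n → Finset ℕ) : Prop :=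
  ∃ A ∈ M, ∃ m : Fin n → ℕ,
    (∀ k, A (m k) = true) ∧
    (∀ k, ∀ i ∈ E k, m k ≤ i) ∧
    (∀ (k : Fin n) (h : (k : ℕ) + 1 < n), ∀ i ∈ E k, i < m ⟨(k : ℕ) + 1, h⟩)

open Finsupp in
/-- The smallest absolutely convex subset of `c₀₀` containing all basic vectors `e i`
and closed under `x₁, …, xₙ ↦ (1/2) ∑ₖ Eₖ xₖ` for `M`-admissible families `{E₁, …, Eₙ}`. -/
inductive Theta (M : Set (ℕ → Bool)) : (ℕ →₀ ℝ) → Prop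
  | basis (i : ℕ) : Theta M (Finsupp.single i 1)
  | conv {x y : ℕ →₀ ℝ} {a b : ℝ} (hab : |a| + |b| ≤ 1)
      (hx : Theta M x) (hy : Theta M y) : Theta M (a • x + b • y)
  | adm {n : ℕ} (E : Fin n → Finset ℕ) (x : Fin n → (ℕ →₀ ℝ))
      (hE : MAdmissible M E) (hx : ∀ k, Theta M (x k)) :
      Theta M ((2⁻¹ : ℝ) • ∑ k, ((x k).filter (· ∈ E k)))

/-- The Tsirelson-type norm `‖·‖_M`: the Minkowski gauge of `Θ_M`. -/
noncomputable def tnorm (M : Set (ℕ → Bool)) (x : ℕ →₀ ℝ) : ℝ :=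
  gauge {y | Theta M y} x
open Pointwise

variable {M : Set (ℕ → Bool)}

lemma theta_zero : Theta M 0 := by
  have := Theta.conv (M := M) (a := 0) (b := 0) (x := Finsupp.single 0 1)
    (y := Finsupp.single 0 1) (by norm_num) (Theta.basis 0) (Theta.basis 0)
  simpa using this

lemma theta_smul {x : ℕ →₀ ℝ} {a : ℝ} (ha : |a| ≤ 1) (hx : Theta M x) : Theta M (a • x) := by
  have := Theta.conv (a := a) (b := 0) (by simpa using ha) hx hx
  simpa using this

lemma theta_combo : ∀ (s : Finset ℕ) (c : ℕ → ℝ), (∑ i ∈ s, |c i| ≤ 1) →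
    Theta M (∑ i ∈ s, c i • Finsupp.single i 1) := by
  intro s
  induction s using Finset.induction_on with
  | empty => intro c _; simpa using (theta_zero (M := M))
  | @insert j s hj ih =>
    intro c hc
    rw [Finset.sum_insert hj] at hc ⊢
    set t := ∑ i ∈ s, |c i| with ht
    have ht0 : 0 ≤ t := Finset.sum_nonneg fun i _ => abs_nonneg _
    rcases eq_or_lt_of_le ht0 with h0 | h0
    · have hs0 : ∑ i ∈ s, c i • Finsupp.single i (1:ℝ) = 0 := by
        apply Finset.sum_eq_zero; intro i hi
        have h1 : |c i| ≤ t := Finset.single_le_sum (f := fun i => |c i|)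
          (fun i _ => abs_nonneg _) hi
        have : c i = 0 := abs_eq_zero.mp (le_antisymm (h1.trans (le_of_eq h0.symm)) (abs_nonneg _))
        simp [this]
      rw [hs0]
      have := Theta.conv (M := M) (a := c j) (b := 0)
        (by simp only [abs_zero, add_zero]; nlinarith [abs_nonneg (c j)])
        (Theta.basis j) (theta_zero)
      simpa using this
    · have hy : Theta M (∑ i ∈ s, (c i / t) • Finsupp.single i 1) := by
        apply ih
        have : ∑ i ∈ s, |c i / t| = (∑ i ∈ s, |c i|) / t := by
          rw [Finset.sum_div]
          refine Finset.sum_congr rfl fun i _ => ?_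
          rw [abs_div, abs_of_pos h0]
        rw [this, ← ht, div_self (ne_of_gt h0)]
      have hconv := Theta.conv (M := M) (a := c j) (b := t)
        (by rw [abs_of_pos h0]; exact hc) (Theta.basis j) hy
      have heq : t • ∑ i ∈ s, (c i / t) • Finsupp.single i (1:ℝ)
          = ∑ i ∈ s, c i • Finsupp.single i 1 := by
        rw [Finset.smul_sum]
        refine Finset.sum_congr rfl fun i _ => ?_
        rw [smul_smul]
        congr 1
        field_simp
      rw [heq] at hconv
      exact hconv

lemma theta_filter (p : ℕ → Prop) [DecidablePred p] {x : ℕ →₀ ℝ} (hx : Theta M x) :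
    Theta M (x.filter p) := by
  induction hx with
  | basis i =>
    by_cases h : p i
    · rw [Finsupp.filter_single_of_pos _ h]; exact Theta.basis i
    · rw [Finsupp.filter_single_of_neg _ h]; exact theta_zero
  | conv hab _ _ ihx ihy =>
    rw [Finsupp.filter_add, Finsupp.filter_smul, Finsupp.filter_smul]
    exact Theta.conv hab ihx ihy
  | adm E x hE _ ih =>
    have heq : ((2⁻¹:ℝ) • ∑ k, (x k).filter (· ∈ E k)).filter p
        = (2⁻¹:ℝ) • ∑ k, ((x k).filter p).filter (· ∈ E k) := by
      ext a
      by_cases hp : p a <;>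
        simp [Finsupp.filter_apply, hp, Finsupp.finset_sum_apply]
    rw [heq]
    exact Theta.adm E _ hE ih

lemma rep (x : ℕ →₀ ℝ) {s : Finset ℕ} (hs : x.support ⊆ s) :
    ∑ i ∈ s, x i • Finsupp.single i (1:ℝ) = x := by
  ext a
  rw [Finsupp.finset_sum_apply]
  simp only [Finsupp.smul_apply, Finsupp.single_apply, smul_eq_mul, mul_ite, mul_one, mul_zero]
  rw [Finset.sum_ite_eq' s a x]
  by_cases ha : a ∈ s
  · simp [ha]
  · simp [ha, Finsupp.notMem_support_iff.mp (fun h => ha (hs h))]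

lemma exists_mem_smul (x : ℕ →₀ ℝ) : ∃ r : ℝ, 0 < r ∧ x ∈ r • {y | Theta M y} := by
  by_cases hx : x = 0
  · exact ⟨1, one_pos, ⟨0, theta_zero, by simp [hx]⟩⟩
  · set N := ∑ i ∈ x.support, |x i| with hN
    have hN0 : 0 < N := by
      obtain ⟨i, hi⟩ : x.support.Nonempty := Finsupp.support_nonempty_iff.mpr hx
      exact Finset.sum_pos' (fun i _ => abs_nonneg _)
        ⟨i, hi, abs_pos.mpr (Finsupp.mem_support_iff.mp hi)⟩
    refine ⟨N, hN0, ⟨N⁻¹ • x, ?_, smul_inv_smul₀ (ne_of_gt hN0) x⟩⟩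
    have : N⁻¹ • x = ∑ i ∈ x.support, (N⁻¹ * x i) • Finsupp.single i (1:ℝ) := by
      conv_lhs => rw [← rep x (le_refl x.support)]
      rw [Finset.smul_sum]
      refine Finset.sum_congr rfl fun i _ => ?_
      rw [smul_smul]
    rw [this]
    apply theta_combo
    have : ∑ i ∈ x.support, |N⁻¹ * x i| = N⁻¹ * N := by
      rw [hN, Finset.mul_sum]
      refine Finset.sum_congr rfl fun i _ => ?_
      rw [abs_mul, abs_of_pos (inv_pos.mpr hN0)]
    rw [this, inv_mul_cancel₀ (ne_of_gt hN0)]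

lemma mem_smul_of_lt {x : ℕ →₀ ℝ} {r : ℝ} (h : tnorm M x < r) :
    x ∈ r • {y | Theta M y} := by
  obtain ⟨N, hN, hmem⟩ := exists_mem_smul (M := M) x
  have hne : ({t ∈ Set.Ioi (0:ℝ) | x ∈ t • {y | Theta M y}}).Nonempty := ⟨N, hN, hmem⟩
  rw [tnorm, gauge_def] at h
  obtain ⟨t, ⟨ht0, y, hy, hyx⟩, htr⟩ := exists_lt_of_csInf_lt hne h
  have hr0 : 0 < r := lt_trans ht0 htr
  refine ⟨(t/r) • y, theta_smul ?_ hy, ?_⟩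
  · rw [abs_of_pos (div_pos ht0 hr0)]
    exact le_of_lt ((div_lt_one hr0).mpr htr)
  · show r • (t / r) • y = x
    rw [smul_smul, mul_div_cancel₀ _ (ne_of_gt hr0)]
    exact hyx

lemma tnorm_le_of_mem {x : ℕ →₀ ℝ} {r : ℝ} (h0 : 0 ≤ r) (h : x ∈ r • {y | Theta M y}) :
    tnorm M x ≤ r := gauge_le_of_mem h0 h

lemma tnorm_nonneg' (x : ℕ →₀ ℝ) : 0 ≤ tnorm M x := gauge_nonneg x

lemma tnorm_map_le (T : (ℕ →₀ ℝ) → (ℕ →₀ ℝ)) (hT : ∀ (r : ℝ) y, T (r • y) = r • T y)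
    (hS : ∀ y, Theta M y → Theta M (T y)) (x : ℕ →₀ ℝ) : tnorm M (T x) ≤ tnorm M x := by
  refine le_of_forall_pos_le_add fun ε hε => ?_
  have h : tnorm M x < tnorm M x + ε := lt_add_of_pos_right _ hε
  obtain ⟨y, hy, hyx⟩ := mem_smul_of_lt h
  refine tnorm_le_of_mem (add_nonneg (tnorm_nonneg' x) hε.le) ⟨T y, hS y hy, ?_⟩
  show (tnorm M x + ε) • T y = T x
  rw [← hT]
  exact congrArg T hyx

lemma tnorm_filter_le (p : ℕ → Prop) [DecidablePred p] (x : ℕ →₀ ℝ) :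
    tnorm M (x.filter p) ≤ tnorm M x :=
  tnorm_map_le (fun y => y.filter p) (fun r y => Finsupp.filter_smul)
    (fun y hy => theta_filter p hy) x

lemma tnorm_neg_le (x : ℕ →₀ ℝ) : tnorm M (-x) ≤ tnorm M x :=
  tnorm_map_le (fun y => -y) (fun r y => (smul_neg r y).symm)
    (fun y hy => by simpa using theta_smul (a := -1) (by norm_num) hy) x

lemma tnorm_nonneg (x : ℕ →₀ ℝ) : 0 ≤ tnorm M x := gauge_nonneg x

lemma tnorm_adm {n : ℕ} (E : Fin n → Finset ℕ) (y : Fin n → (ℕ →₀ ℝ)) (hE : MAdmissible M E)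
    (hsupp : ∀ k i, y k i ≠ 0 → i ∈ E k) (c : ℝ) (hc : 0 ≤ c) (hy : ∀ k, tnorm M (y k) ≤ c) :
    tnorm M (∑ k, y k) ≤ 2 * c := by
  refine le_of_forall_pos_le_add fun ε hε => ?_
  set δ := ε / 2 with hδ
  have hδ0 : 0 < δ := by positivity
  have hk : ∀ k, ∃ w, Theta M w ∧ (c + δ) • w = y k := by
    intro k
    have := mem_smul_of_lt (M := M) (x := y k) (r := c + δ)
      (lt_of_le_of_lt (hy k) (by linarith))
    obtain ⟨w, hw, hwy⟩ := this
    exact ⟨w, hw, hwy⟩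
  choose w hw hwy using hk
  have hcδ : (0:ℝ) < c + δ := by linarith
  have hfil : ∀ k, (w k).filter (· ∈ E k) = w k := by
    intro k
    rw [Finsupp.filter_eq_self_iff]
    intro i hi
    apply hsupp k i
    rw [← hwy k]
    simp only [Finsupp.smul_apply, smul_eq_mul]
    exact mul_ne_zero (ne_of_gt hcδ) hi
  have hz : Theta M ((2⁻¹:ℝ) • ∑ k, (w k).filter (· ∈ E k)) := Theta.adm E w hE hw
  have heq : (2 * (c + δ)) • ((2⁻¹:ℝ) • ∑ k, (w k).filter (· ∈ E k)) = ∑ k, y k := by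
    simp only [hfil]
    rw [smul_smul]
    have : 2 * (c + δ) * 2⁻¹ = c + δ := by ring
    rw [this, Finset.smul_sum]
    exact Finset.sum_congr rfl fun k _ => hwy k
  have := tnorm_le_of_mem (M := M) (by positivity) ⟨_, hz, heq⟩
  calc tnorm M (∑ k, y k) ≤ 2 * (c + δ) := this
    _ = 2 * c + ε := by rw [hδ]; ring

/-- If `M` contains all three-element sets, then the canonical basis is a shrinking basis of
the completion `T*[M,1/2]`: every `‖·‖_M`-bounded linear functional `x*` on `c₀₀` satisfies
`x* = ∑ᵢ x*(eᵢ) eᵢ*` in the dual norm, i.e. the dual norms of the tails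
`x* - ∑_{i<n} x*(eᵢ) eᵢ*` tend to `0`. -/
theorem stmt5 (M : Set (ℕ → Bool)) (hM : IsCompact M)
    (h3 : ∀ m₁ m₂ m₃ : ℕ, m₁ < m₂ → m₂ < m₃ →
      (fun i => decide (i = m₁ ∨ i = m₂ ∨ i = m₃)) ∈ M) :
    ∀ f : (ℕ →₀ ℝ) →ₗ[ℝ] ℝ, (∃ C : ℝ, ∀ x : ℕ →₀ ℝ, |f x| ≤ C * tnorm M x) →
      Filter.Tendsto
        (fun n : ℕ => sSup {r : ℝ | ∃ x : ℕ →₀ ℝ, tnorm M x ≤ 1 ∧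
          r = |f x - ∑ i ∈ Finset.range n, x i * f (Finsupp.single i 1)|})
        Filter.atTop (nhds 0) := by
  classical
  intro f hf
  obtain ⟨C, hC⟩ := hf
  set C' := max C 0 with hC'def
  have hC'0 : 0 ≤ C' := le_max_right _ _
  have hC' : ∀ x : ℕ →₀ ℝ, |f x| ≤ C' * tnorm M x := fun x =>
    (hC x).trans (mul_le_mul_of_nonneg_right (le_max_left _ _) (tnorm_nonneg' x))
  have frep : ∀ (y : ℕ →₀ ℝ) (s : Finset ℕ), y.support ⊆ s →
      f y = ∑ i ∈ s, y i * f (Finsupp.single i 1) := by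
    intro y s hs
    conv_lhs => rw [← rep y hs]
    rw [map_sum]
    refine Finset.sum_congr rfl fun i _ => ?_
    rw [map_smul, smul_eq_mul]
  have hid : ∀ (n : ℕ) (x : ℕ →₀ ℝ),
      f x - ∑ i ∈ Finset.range n, x i * f (Finsupp.single i 1)
        = f (x.filter (fun i => n ≤ i)) := by
    intro n x
    have hsplit := Finsupp.filter_pos_add_filter_neg x (fun i => n ≤ i)
    have hfx : f x = f (x.filter (fun i => n ≤ i)) + f (x.filter (fun i => ¬ n ≤ i)) := by
      rw [← map_add, hsplit]
    have h1 : f (x.filter (fun i => ¬ n ≤ i))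
        = ∑ i ∈ Finset.range n, x i * f (Finsupp.single i 1) := by
      rw [frep _ (Finset.range n) (by
        intro i hi
        rw [Finsupp.support_filter, Finset.mem_filter] at hi
        exact Finset.mem_range.mpr (by omega))]
      refine Finset.sum_congr rfl fun i hi => ?_
      congr 1
      exact Finsupp.filter_apply_pos _ _ (by
        have := Finset.mem_range.mp hi; omega)
    rw [hfx, h1]; ring
  set Sn := fun n : ℕ => {r : ℝ | ∃ x : ℕ →₀ ℝ, tnorm M x ≤ 1 ∧
      r = |f x - ∑ i ∈ Finset.range n, x i * f (Finsupp.single i 1)|} with hSn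
  show Filter.Tendsto (fun n => sSup (Sn n)) Filter.atTop (nhds 0)
  have h0mem : ∀ n, (0:ℝ) ∈ Sn n := by
    intro n
    refine ⟨0, ?_, ?_⟩
    · show gauge {y | Theta M y} 0 ≤ 1
      rw [gauge_zero]; norm_num
    · simp
  have hub : ∀ n, ∀ r ∈ Sn n, r ≤ C' := by
    intro n r hr
    obtain ⟨x, hx1, hr⟩ := hr
    rw [hr, hid n x]
    calc |f (x.filter fun i => n ≤ i)| ≤ C' * tnorm M (x.filter fun i => n ≤ i) := hC' _
      _ ≤ C' * tnorm M x := mul_le_mul_of_nonneg_left (tnorm_filter_le _ x) hC'0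
      _ ≤ C' * 1 := mul_le_mul_of_nonneg_left hx1 hC'0
      _ = C' := mul_one C'
  have hbdd : ∀ n, BddAbove (Sn n) := fun n => ⟨C', fun r hr => hub n r hr⟩
  have hg0 : ∀ n, 0 ≤ sSup (Sn n) := fun n => le_csSup (hbdd n) (h0mem n)
  have hsub : ∀ n, Sn (n+1) ⊆ Sn n := by
    intro n r hr
    obtain ⟨x, hx1, hr⟩ := hr
    refine ⟨x.filter (fun i => n+1 ≤ i), (tnorm_filter_le _ x).trans hx1, ?_⟩
    have hff : (x.filter (fun i => n+1 ≤ i)).filter (fun i => n ≤ i)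
        = x.filter (fun i => n+1 ≤ i) := by
      ext a
      simp only [Finsupp.filter_apply]
      split_ifs with h1 h2
      · rfl
      · rfl
      · exact (h1 (by omega)).elim
      · rfl
    rw [hr, hid (n+1) x, hid n (x.filter fun i => n+1 ≤ i), hff]
  have hganti : Antitone (fun n => sSup (Sn n)) :=
    antitone_nat_of_succ_le fun n => csSup_le_csSup (hbdd n) ⟨0, h0mem (n+1)⟩ (hsub n)
  have hbelow : BddBelow (Set.range fun n => sSup (Sn n)) :=
    ⟨0, by rintro r ⟨n, rfl⟩; exact hg0 n⟩
  have hconv : Filter.Tendsto (fun n => sSup (Sn n)) Filter.atTop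
      (nhds (⨅ n, sSup (Sn n))) := tendsto_atTop_ciInf hganti hbelow
  set L := ⨅ n, sSup (Sn n) with hLdef
  have hL0 : 0 ≤ L := le_ciInf hg0
  suffices hLle : L ≤ 0 by
    have hLeq : L = 0 := le_antisymm hLle hL0
    rw [← hLeq]; exact hconv
  by_contra hL'
  push_neg at hL'
  have hLg : ∀ n, L ≤ sSup (Sn n) := fun n => ciInf_le hbelow n
  have base : ∀ n : ℕ, ∃ v : ℕ →₀ ℝ,
      tnorm M v ≤ 1 ∧ (∀ i ∈ v.support, n ≤ i) ∧ L/2 ≤ f v := by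
    intro n
    have h2 : L/2 < sSup (Sn n) := lt_of_lt_of_le (by linarith) (hLg n)
    obtain ⟨r, ⟨x, hx1, hr⟩, hr2⟩ := exists_lt_of_lt_csSup ⟨0, h0mem n⟩ h2
    rw [hr, hid n x] at hr2
    set v0 := x.filter (fun i => n ≤ i) with hv0
    have hsupp0 : ∀ i ∈ v0.support, n ≤ i := by
      intro i hi
      rw [hv0, Finsupp.support_filter, Finset.mem_filter] at hi
      exact hi.2
    rcases le_or_gt 0 (f v0) with hs | hs
    · refine ⟨v0, (tnorm_filter_le _ x).trans hx1, hsupp0, ?_⟩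
      rw [abs_of_nonneg hs] at hr2; linarith
    · refine ⟨-v0, (tnorm_neg_le v0).trans ((tnorm_filter_le _ x).trans hx1), ?_, ?_⟩
      · intro i hi; rw [Finsupp.support_neg] at hi; exact hsupp0 i hi
      · rw [abs_of_neg hs] at hr2; rw [map_neg]; linarith
  have key : ∀ k n : ℕ, ∃ v : ℕ →₀ ℝ,
      tnorm M v ≤ (2/3:ℝ)^k ∧ (∀ i ∈ v.support, n ≤ i) ∧ L/2 ≤ f v := by
    intro k
    induction k with
    | zero => simpa using base
    | succ k ih =>
      intro n
      obtain ⟨v₁, h1t, h1s, h1f⟩ := ih n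
      set m₂ := max ((v₁.support.sup id) + 1) (n+1) with hm₂
      obtain ⟨v₂, h2t, h2s, h2f⟩ := ih m₂
      set m₃ := max ((v₂.support.sup id) + 1) (m₂+1) with hm₃
      obtain ⟨v₃, h3t, h3s, h3f⟩ := ih m₃
      have hnm₂ : n < m₂ := lt_of_lt_of_le (Nat.lt_succ_self n) (le_max_right _ _)
      have hm₂m₃ : m₂ < m₃ := lt_of_lt_of_le (Nat.lt_succ_self m₂) (le_max_right _ _)
      set y : Fin 3 → (ℕ →₀ ℝ) :=
        fun k => if k.val = 0 then v₁ else if k.val = 1 then v₂ else v₃ with hy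
      have hysum : ∑ k, y k = v₁ + v₂ + v₃ := by
        rw [Fin.sum_univ_three]
        rfl
      have hE : MAdmissible M (fun k => (y k).support) := by
        refine ⟨_, h3 n m₂ m₃ hnm₂ hm₂m₃,
          fun k => if k.val = 0 then n else if k.val = 1 then m₂ else m₃, ?_, ?_, ?_⟩
        · intro k
          fin_cases k <;> simp
        · intro k i hi
          fin_cases k
          · exact h1s i hi
          · exact h2s i hi
          · exact h3s i hi
        · intro k h
          fin_cases k
          · intro i hi
            show i < m₂
            exact lt_of_lt_of_le (Nat.lt_succ_of_le (Finset.le_sup (f := id) hi))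
              (le_max_left _ _)
          · intro i hi
            show i < m₃
            exact lt_of_lt_of_le (Nat.lt_succ_of_le (Finset.le_sup (f := id) hi))
              (le_max_left _ _)
          · exact absurd h (by decide)
      have hsum : tnorm M (∑ k, y k) ≤ 2 * (2/3:ℝ)^k := by
        refine tnorm_adm _ y hE (fun k i hi => Finsupp.mem_support_iff.mpr hi) _
          (by positivity) ?_
        intro k
        fin_cases k
        · exact h1t
        · exact h2t
        · exact h3t
      refine ⟨(3⁻¹:ℝ) • ∑ k, y k, ?_, ?_, ?_⟩
      · have hsm := gauge_smul_of_nonneg (s := {y | Theta M y}) (a := (3⁻¹:ℝ))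
          (by norm_num) (∑ k, y k)
        show gauge {y | Theta M y} ((3⁻¹:ℝ) • ∑ k, y k) ≤ _
        rw [hsm, smul_eq_mul]
        calc 3⁻¹ * gauge {y | Theta M y} (∑ k, y k) ≤ 3⁻¹ * (2 * (2/3)^k) := by
              exact mul_le_mul_of_nonneg_left hsum (by norm_num)
          _ = (2/3)^(k+1) := by ring
      · intro i hi
        have hi' : i ∈ (∑ k, y k).support := Finsupp.support_smul hi
        rw [hysum] at hi'
        have hi'' := Finsupp.support_add hi'
        rcases Finset.mem_union.mp hi'' with h | h
        · rcases Finset.mem_union.mp (Finsupp.support_add h) with h' | h'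
          · exact h1s i h'
          · exact le_trans hnm₂.le (h2s i h')
        · exact le_trans (hnm₂.le.trans hm₂m₃.le) (h3s i h)
      · rw [map_smul, smul_eq_mul, hysum, map_add, map_add]
        linarith
  obtain ⟨k, hk⟩ : ∃ k : ℕ, C' * (2/3:ℝ)^k < L/2 := by
    have h23 : Filter.Tendsto (fun k : ℕ => C' * (2/3:ℝ)^k) Filter.atTop (nhds 0) := by
      simpa using (tendsto_pow_atTop_nhds_zero_of_lt_one (r := (2/3:ℝ))
        (by norm_num) (by norm_num)).const_mul C'
    exact (h23.eventually (gt_mem_nhds (by linarith : (0:ℝ) < L/2))).exists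
  obtain ⟨v, hvt, -, hvf⟩ := key k 0
  have hfin : L/2 ≤ C' * (2/3:ℝ)^k :=
    le_trans (le_trans hvf (le_abs_self _))
      (le_trans (hC' v) (mul_le_mul_of_nonneg_left hvt hC'0))
  linarith
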